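/- Let H be a graded connected bialgebra, let ρ : H → S ⊗ H be a coaction satisfying the cointeraction identity m^{1,3}(ρ ⊗ ρ)Δ = (id ⊗ Δ)ρ, where m^{1,3}(a⊗b⊗c⊗d) = ac⊗b⊗d and S is a commutative bialgebra. Let ℓ : S → k be a character, and define M_ℓ := (ℓ ⊗ id)ρ : H → H. Then for all x ∈ H: (M_ℓ ⊗ M_ℓ)Δ(x) = Δ(M_ℓ(x)), i.e. M_ℓ is a coalgebra morphism for Δ. -/
import Mathlib


set_option autoImplicit false

open TensorProduct

/-- `M_ℓ = (ℓ ⊗ id) ∘ ρ`, the renormalisation map attached to a coaction `ρ` and a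
character `ℓ`. -/
noncomputable def Ml (k H S : Type*) [CommRing k] [AddCommGroup H] [Module k H]
    [CommRing S] [Algebra k S] (ρ : H →ₗ[k] S ⊗[k] H) (ℓ : S →ₐ[k] k) : H →ₗ[k] H :=
  (TensorProduct.lid k H).toLinearMap ∘ₗ TensorProduct.map ℓ.toLinearMap LinearMap.id ∘ₗ ρ

open TensorProduct

lemma lemA (k H S : Type*) [CommRing k] [Ring H] [Bialgebra k H]
    [CommRing S] [Algebra k S] (ℓ : S →ₐ[k] k) :
    (Coalgebra.comul (R := k) (A := H)) ∘ₗ (TensorProduct.lid k H).toLinearMap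
      ∘ₗ TensorProduct.map ℓ.toLinearMap LinearMap.id
    = (TensorProduct.lid k (H ⊗[k] H)).toLinearMap
      ∘ₗ TensorProduct.map ℓ.toLinearMap LinearMap.id
      ∘ₗ TensorProduct.map LinearMap.id (Coalgebra.comul (R := k) (A := H)) := by
  ext s h
  simp

lemma lemB (k H S : Type*) [CommRing k] [Ring H] [Bialgebra k H]
    [CommRing S] [Algebra k S] (ℓ : S →ₐ[k] k) :
    TensorProduct.map
        ((TensorProduct.lid k H).toLinearMap ∘ₗ TensorProduct.map ℓ.toLinearMap LinearMap.id)
        ((TensorProduct.lid k H).toLinearMap ∘ₗ TensorProduct.map ℓ.toLinearMap LinearMap.id)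
    = (TensorProduct.lid k (H ⊗[k] H)).toLinearMap
      ∘ₗ TensorProduct.map ℓ.toLinearMap LinearMap.id
      ∘ₗ TensorProduct.map (LinearMap.mul' k S) LinearMap.id
      ∘ₗ (TensorProduct.tensorTensorTensorComm k S H S H).toLinearMap := by
  apply TensorProduct.ext_fourfold'
  intro a b c d
  simp only [LinearMap.compr₂_apply, TensorProduct.mk_apply, TensorProduct.map_tmul,
    LinearMap.coe_comp, LinearEquiv.coe_coe, Function.comp_apply, LinearMap.id_coe, id_eq,
    TensorProduct.lid_tmul, AlgHom.toLinearMap_apply, TensorProduct.tensorTensorTensorComm_tmul,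
    LinearMap.mul'_apply, map_mul, TensorProduct.smul_tmul', TensorProduct.tmul_smul,
    smul_smul, mul_comm]

/-- If `ρ : H → S ⊗ H` is a coaction cointeracting with the coproduct `Δ` of a
bialgebra `H` via `m¹³(ρ ⊗ ρ)Δ = (id ⊗ Δ)ρ`, with `S` a commutative bialgebra and
`ℓ : S → k` a character, then `M_ℓ = (ℓ ⊗ id)ρ` is a coalgebra morphism for `Δ`. -/
theorem stmt_8 (k H S : Type*) [CommRing k] [Ring H] [Bialgebra k H]
    [CommRing S] [Bialgebra k S]
    (ρ : H →ₗ[k] S ⊗[k] H)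
    (hcoassoc : ∀ x : H, (TensorProduct.assoc k S S H)
        ((TensorProduct.map (Coalgebra.comul (R := k) (A := S)) LinearMap.id) (ρ x))
      = (TensorProduct.map LinearMap.id ρ) (ρ x))
    (hcounit : ∀ x : H, (TensorProduct.lid k H)
        ((TensorProduct.map (Coalgebra.counit (R := k) (A := S)) LinearMap.id) (ρ x)) = x)
    (hcointer : ∀ x : H,
      (TensorProduct.map (LinearMap.mul' k S) LinearMap.id)
        ((TensorProduct.tensorTensorTensorComm k S H S H)
          ((TensorProduct.map ρ ρ) (Coalgebra.comul (R := k) x)))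
      = (TensorProduct.map LinearMap.id (Coalgebra.comul (R := k) (A := H))) (ρ x))
    (ℓ : S →ₐ[k] k) :
    ∀ x : H,
      (TensorProduct.map (Ml k H S ρ ℓ) (Ml k H S ρ ℓ)) (Coalgebra.comul (R := k) x)
        = Coalgebra.comul (R := k) (Ml k H S ρ ℓ x) := by
  intro x
  have hMl : Ml k H S ρ ℓ = ((TensorProduct.lid k H).toLinearMap ∘ₗ
      TensorProduct.map ℓ.toLinearMap LinearMap.id) ∘ₗ ρ := rfl
  rw [hMl, TensorProduct.map_comp, lemB k H S ℓ]
  simp only [LinearMap.comp_apply, LinearEquiv.coe_coe]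
  rw [hcointer x]
  have h2 := LinearMap.congr_fun (lemA k H S ℓ) (ρ x)
  simp only [LinearMap.comp_apply, LinearEquiv.coe_coe] at h2
  exact h2.symm
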